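/- Let f be a Boolean network of dimension n and y a fixed point of f. Let O be the union of the vertex sets of the strongly connected components of the interaction graph G(f) that contain a positive cycle, and let g = f[O←y] be the modified network obtained by setting g_i(x) = y_i for all i ∈ O and g_i = f_i otherwise. Then y is reachable in the asynchronous dynamics of g from every state; in particular {y} is the unique attractor of g. -/

import Mathlib

/-- Asynchronous transition: update one vertex `u` where `f` disagrees with `x`. -/
def AsyncStep {n : ℕ} (f : (Fin n → Bool) → (Fin n → Bool)) (x z : Fin n → Bool) : Prop :=
  ∃ u : Fin n, f x u ≠ x u ∧ z = Function.update x u (f x u)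

/-- Reachability: reflexive-transitive closure of the asynchronous transition relation. -/
def Reach {n : ℕ} (f : (Fin n → Bool) → (Fin n → Bool)) :
    (Fin n → Bool) → (Fin n → Bool) → Prop :=
  Relation.ReflTransGen (AsyncStep f)

/-- An attractor: nonempty, closed under transitions, strongly connected for reachability. -/
def IsAttractor {n : ℕ} (f : (Fin n → Bool) → (Fin n → Bool)) (S : Set (Fin n → Bool)) : Prop :=
  S.Nonempty ∧ (∀ x ∈ S, ∀ z, AsyncStep f x z → z ∈ S) ∧ (∀ x ∈ S, ∀ z ∈ S, Reach f x z)

/-- Positive edge of the interaction graph `G(f)`. -/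
def PosEdge {n : ℕ} (f : (Fin n → Bool) → (Fin n → Bool)) (u v : Fin n) : Prop :=
  ∃ x : Fin n → Bool,
    f (Function.update x u true) v = true ∧ f (Function.update x u false) v = false

/-- Negative edge of the interaction graph `G(f)`. -/
def NegEdge {n : ℕ} (f : (Fin n → Bool) → (Fin n → Bool)) (u v : Fin n) : Prop :=
  ∃ x : Fin n → Bool,
    f (Function.update x u true) v = false ∧ f (Function.update x u false) v = true

/-- Signed edge (`true` = positive, `false` = negative). -/
def SignedEdge {n : ℕ} (f : (Fin n → Bool) → (Fin n → Bool)) (u v : Fin n) (s : Bool) : Prop :=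
  match s with
  | true => PosEdge f u v
  | false => NegEdge f u v

/-- A cycle of `G(f)`: a nonempty list of signed edges, consecutively chained,
the last edge returning to the source of the first. -/
def IsCycle {n : ℕ} (f : (Fin n → Bool) → (Fin n → Bool))
    (es : List (Fin n × Fin n × Bool)) : Prop :=
  es ≠ [] ∧ (∀ e ∈ es, SignedEdge f e.1 e.2.1 e.2.2) ∧
  es.Chain' (fun e e' => e.2.1 = e'.1) ∧
  es.getLast?.map (fun e => e.2.1) = es.head?.map (fun e => e.1)

/-- A positive cycle: a cycle traversing an even number of negative edges. -/
def IsPosCycle {n : ℕ} (f : (Fin n → Bool) → (Fin n → Bool))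
    (es : List (Fin n × Fin n × Bool)) : Prop :=
  IsCycle f es ∧ Even (es.countP (fun e => !e.2.2))

/-- Unsigned edge of the interaction graph. -/
def EdgeU {n : ℕ} (f : (Fin n → Bool) → (Fin n → Bool)) (u v : Fin n) : Prop :=
  PosEdge f u v ∨ NegEdge f u v

/-- `v` is an ancestor of `u`: nonempty directed path from `v` to `u` in `G(f)`. -/
def Ancestor {n : ℕ} (f : (Fin n → Bool) → (Fin n → Bool)) (v u : Fin n) : Prop :=
  Relation.TransGen (EdgeU f) v u

/-- `u` and `v` are in the same strongly connected component of (the unsigned) `G(f)`. -/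
def SameSCC {n : ℕ} (f : (Fin n → Bool) → (Fin n → Bool)) (u v : Fin n) : Prop :=
  Relation.ReflTransGen (EdgeU f) u v ∧ Relation.ReflTransGen (EdgeU f) v u

/-- `u` belongs to an SCC of `G(f)` containing a positive cycle. -/
def InPosSCC {n : ℕ} (f : (Fin n → Bool) → (Fin n → Bool)) (u : Fin n) : Prop :=
  ∃ es, IsPosCycle f es ∧ ∀ v ∈ es.map Prod.fst, SameSCC f v u

open Classical in
/-- The modified network `f[I←y]`. -/
noncomputable def modifyBN {n : ℕ} (f : (Fin n → Bool) → (Fin n → Bool)) (I : Set (Fin n))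
    (y : Fin n → Bool) : (Fin n → Bool) → (Fin n → Bool) :=
  fun x i => if i ∈ I then y i else f x i

open Classical in
/-- The state `x_{[x_I = y_I]}`: equal to `y` on `I`, to `x` elsewhere. -/
noncomputable def patchState {n : ℕ} (x : Fin n → Bool) (I : Set (Fin n)) (y : Fin n → Bool) :
    Fin n → Bool :=
  fun i => if i ∈ I then y i else x i

lemma noEdge_update {n : ℕ} (g : (Fin n → Bool) → (Fin n → Bool)) (u v : Fin n)
    (h : ¬ EdgeU g u v) (x : Fin n → Bool) (b : Bool) :
    g (Function.update x u b) v = g x v := by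
  have key : g (Function.update x u true) v = g (Function.update x u false) v := by
    cases ht : g (Function.update x u true) v <;> cases hf : g (Function.update x u false) v
    · rfl
    · exact absurd (Or.inr ⟨x, ht, hf⟩) h
    · exact absurd (Or.inl ⟨x, ht, hf⟩) h
    · rfl
  have hx : g (Function.update x u (x u)) v = g x v := by rw [Function.update_eq_self]
  cases b
  · cases hxu : x u
    · rw [← hx, hxu]
    · rw [← hx, hxu]; exact key.symm
  · cases hxu : x u
    · rw [← hx, hxu]; exact key
    · rw [← hx, hxu]

lemma const_of_no_in {n : ℕ} (g : (Fin n → Bool) → (Fin n → Bool)) (v : Fin n)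
    (h : ∀ u, ¬ EdgeU g u v) (x y : Fin n → Bool) : g x v = g y v := by
  have key : ∀ (s : Finset (Fin n)) (x : Fin n → Bool),
      g (fun i => if i ∈ s then y i else x i) v = g x v := by
    intro s
    induction s using Finset.induction_on with
    | empty => intro x; simp
    | @insert u s hu ih =>
      intro x
      have he : (fun i => if i ∈ insert u s then y i else x i)
          = Function.update (fun i => if i ∈ s then y i else x i) u (y u) := by
        funext i
        by_cases hi : i = u
        · subst hi; simp
        · simp [Function.update_of_ne hi, Finset.mem_insert, hi]
      rw [he, noEdge_update g u v (h u), ih]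
  have := key Finset.univ x
  simp only [Finset.mem_univ, if_true] at this
  exact this.symm

lemma coherent_in_edge {n : ℕ} (g : (Fin n → Bool) → (Fin n → Bool)) (y : Fin n → Bool)
    (v : Fin n) (hv : g y v = y v) (h : ∃ u, EdgeU g u v) :
    ∃ u, SignedEdge g u v (y u == y v) := by
  by_contra hco
  push_neg at hco
  have const : ∀ x : Fin n → Bool, g x v = y v := by
    have key : ∀ (k : ℕ) (x : Fin n → Bool),
        (Finset.univ.filter (fun i => x i ≠ y i)).card ≤ k → g x v = y v := by
      intro k
      induction k with
      | zero =>
        intro x hx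
        have hxy : x = y := by
          funext i
          by_contra hi
          have : i ∈ Finset.univ.filter (fun i => x i ≠ y i) := by simp [hi]
          have := Finset.card_pos.mpr ⟨i, this⟩
          omega
        rw [hxy]; exact hv
      | succ k ih =>
        intro x hx
        by_cases hxy : x = y
        · rw [hxy]; exact hv
        have hex : ∃ i, x i ≠ y i := by
          by_contra h'; push_neg at h'; exact hxy (funext h')
        obtain ⟨i, hi⟩ := hex
        set x' := Function.update x i (y i) with hx'def
        have hsub : Finset.univ.filter (fun j => x' j ≠ y j)
            ⊆ (Finset.univ.filter (fun j => x j ≠ y j)).erase i := by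
          intro j hj
          simp only [Finset.mem_filter, Finset.mem_univ, true_and] at hj
          have hji : j ≠ i := by
            intro hji; subst hji
            exact hj (by simp [hx'def])
          refine Finset.mem_erase.mpr ⟨hji, ?_⟩
          simp only [Finset.mem_filter, Finset.mem_univ, true_and]
          rwa [hx'def, Function.update_of_ne hji] at hj
        have hcard : (Finset.univ.filter (fun j => x' j ≠ y j)).card ≤ k := by
          have h1 := Finset.card_le_card hsub
          have h2 : i ∈ Finset.univ.filter (fun j => x j ≠ y j) := by simp [hi]
          have h3 := Finset.card_erase_of_mem h2
          have h4 := Finset.card_pos.mpr ⟨i, h2⟩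
          omega
        have hgx' : g x' v = y v := ih x' hcard
        by_contra hne
        have hgx : g x v = !(y v) := by
          cases hgv : g x v <;> cases hyv : y v <;> simp_all
        have hxi : x i = !(y i) := by
          cases hxi' : x i <;> cases hyi : y i <;> simp_all
        have e1 : Function.update x' i (y i) = x' := by
          rw [hx'def]; simp
        have e2 : Function.update x' i (!(y i)) = x := by
          funext j
          by_cases hj : j = i
          · subst hj; rw [hxi]; simp
          · rw [Function.update_of_ne hj, hx'def, Function.update_of_ne hj]
        apply hco i
        cases hyi : y i <;> cases hyv : y v
        · -- y i = false, y v = false : positive edge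
          have uT : Function.update x' i true = x := by simpa [hyi] using e2
          have uF : Function.update x' i false = x' := by simpa [hyi] using e1
          exact (⟨x', by simp [uT, hgx, hyv], by simp [uF, hgx', hyv]⟩ : PosEdge g i v)
        · -- y i = false, y v = true : negative edge
          have uT : Function.update x' i true = x := by simpa [hyi] using e2
          have uF : Function.update x' i false = x' := by simpa [hyi] using e1
          exact (⟨x', by simp [uT, hgx, hyv], by simp [uF, hgx', hyv]⟩ : NegEdge g i v)
        · -- y i = true, y v = false : negative edge
          have uT : Function.update x' i true = x' := by simpa [hyi] using e1
          have uF : Function.update x' i false = x := by simpa [hyi] using e2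
          exact (⟨x', by simp [uT, hgx', hyv], by simp [uF, hgx, hyv]⟩ : NegEdge g i v)
        · -- y i = true, y v = true : positive edge
          have uT : Function.update x' i true = x' := by simpa [hyi] using e1
          have uF : Function.update x' i false = x := by simpa [hyi] using e2
          exact (⟨x', by simp [uT, hgx', hyv], by simp [uF, hgx, hyv]⟩ : PosEdge g i v)
    intro x
    exact key _ x le_rfl
  obtain ⟨u, hu⟩ := h
  rcases hu with ⟨x, h1, h2⟩ | ⟨x, h1, h2⟩ <;> rw [const] at h1 h2 <;> simp_all

def cycList {n : ℕ} (w : ℕ → Fin n) (y : Fin n → Bool) (i : ℕ) :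
    ℕ → List (Fin n × Fin n × Bool)
  | 0 => []
  | (k+1) => (w (i+k+1), w (i+k), (y (w (i+k+1)) == y (w (i+k)))) :: cycList w y i k

lemma cycList_mem {n : ℕ} {g : (Fin n → Bool) → (Fin n → Bool)} {w : ℕ → Fin n}
    {y : Fin n → Bool} {i : ℕ}
    (hw : ∀ k, SignedEdge g (w (k+1)) (w k) (y (w (k+1)) == y (w k))) :
    ∀ k, ∀ e ∈ cycList w y i k, SignedEdge g e.1 e.2.1 e.2.2 := by
  intro k
  induction k with
  | zero => intro e he; simp [cycList] at he
  | succ k ih =>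
    intro e he
    rcases List.mem_cons.mp he with h | h
    · subst h; exact hw (i+k)
    · exact ih e h

lemma cycList_head {n : ℕ} (w : ℕ → Fin n) (y : Fin n → Bool) (i k : ℕ) :
    (cycList w y i (k+1)).head?.map Prod.fst = some (w (i+k+1)) := rfl

lemma cycList_getLast {n : ℕ} (w : ℕ → Fin n) (y : Fin n → Bool) (i : ℕ) :
    ∀ k, (cycList w y i (k+1)).getLast?.map (fun e => e.2.1) = some (w i) := by
  intro k
  induction k with
  | zero => rfl
  | succ k ih =>
    show ((_ :: cycList w y i (k+1)).getLast?).map _ = _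
    rw [show (cycList w y i (k+1)) = _ :: cycList w y i k from rfl] at ih ⊢
    rw [List.getLast?_cons_cons]
    exact ih

lemma cycList_chain {n : ℕ} (w : ℕ → Fin n) (y : Fin n → Bool) (i : ℕ) :
    ∀ k, (cycList w y i k).Chain' (fun e e' => e.2.1 = e'.1) := by
  intro k
  induction k with
  | zero => simp [cycList, List.Chain']
  | succ k ih =>
    cases k with
    | zero => simp [cycList, List.Chain']
    | succ k' =>
      simp only [cycList] at ih ⊢
      rw [List.Chain', List.isChain_cons_cons]
      exact ⟨rfl, ih⟩

lemma cycList_even {n : ℕ} (w : ℕ → Fin n) (y : Fin n → Bool) (i : ℕ) :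
    ∀ k, (Even ((cycList w y i k).countP (fun e => !e.2.2)) ↔ (y (w (i+k)) = y (w i))) := by
  intro k
  induction k with
  | zero => simp [cycList]
  | succ k ih =>
    rw [Nat.add_succ i k]
    rw [show cycList w y i (k+1) = _ :: cycList w y i k from rfl]
    rw [List.countP_cons]
    cases h1 : y (w (i+k+1)) <;> rw [h1] at * <;> cases h4 : y (w (i+k)) <;> rw [h4] at ih <;>
      cases h3 : y (w i) <;> rw [h3] at ih <;>
      simp_all [Nat.even_add_one]

lemma posCycle_of_walk {n : ℕ} {g : (Fin n → Bool) → (Fin n → Bool)} {y : Fin n → Bool}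
    {w : ℕ → Fin n}
    (hw : ∀ k, SignedEdge g (w (k+1)) (w k) (y (w (k+1)) == y (w k)))
    {i j : ℕ} (hij : i < j) (heq : w i = w j) : ∃ es, IsPosCycle g es := by
  obtain ⟨m, hm⟩ : ∃ m, j - i = m + 1 := ⟨j - i - 1, by omega⟩
  have hj : i + (m + 1) = j := by omega
  refine ⟨cycList w y i (m+1), ⟨?_, ?_, ?_, ?_⟩, ?_⟩
  · exact List.cons_ne_nil _ _
  · exact cycList_mem hw (m+1)
  · exact cycList_chain w y i (m+1)
  · rw [cycList_getLast w y i m]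
    have : (cycList w y i (m+1)).head?.map (fun e => e.1) = some (w (i+m+1)) :=
      cycList_head w y i m
    rw [this, show i + m + 1 = j from by omega, heq]
  · refine (cycList_even w y i (m+1)).mpr ?_
    rw [hj, heq]

lemma exists_posCycle_of_no_source {n : ℕ} (g : (Fin n → Bool) → (Fin n → Bool))
    (y : Fin n → Bool) (hy : g y = y)
    (hall : ∀ u, (∃ v, EdgeU g u v) → ∃ w, EdgeU g w u)
    (hedge : ∃ u v, EdgeU g u v) : ∃ es, IsPosCycle g es := by
  classical
  obtain ⟨u0, v0, he⟩ := hedge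
  have step : ∀ v : Fin n, (∃ w, EdgeU g w v) →
      ∃ w, SignedEdge g w v (y w == y v) ∧ (∃ w', EdgeU g w' w) := by
    intro v hv
    obtain ⟨w, hw⟩ := coherent_in_edge g y v (congrFun hy v) hv
    refine ⟨w, hw, hall w ⟨v, ?_⟩⟩
    cases hsv : (y w == y v) <;> rw [hsv] at hw
    · exact Or.inr hw
    · exact Or.inl hw
  let seq : ℕ → {v : Fin n // ∃ w, EdgeU g w v} := fun k =>
    Nat.rec ⟨v0, u0, he⟩ (fun _ p => ⟨(step p.1 p.2).choose, (step p.1 p.2).choose_spec.2⟩) k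
  let w : ℕ → Fin n := fun k => (seq k).1
  have hw : ∀ k, SignedEdge g (w (k+1)) (w k) (y (w (k+1)) == y (w k)) := by
    intro k
    exact (step (seq k).1 (seq k).2).choose_spec.1
  obtain ⟨a, b, hab, hfab⟩ :=
    Fintype.exists_ne_map_eq_of_card_lt (fun k : Fin (n+1) => w k) (by simp)
  have hvne : (a : ℕ) ≠ (b : ℕ) := fun h => hab (Fin.val_injective h)
  rcases Nat.lt_or_ge (a : ℕ) (b : ℕ) with h | h
  · exact posCycle_of_walk hw h hfab
  · exact posCycle_of_walk hw (by omega) hfab.symm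

lemma reach_of_const {n : ℕ} (g : (Fin n → Bool) → (Fin n → Bool)) (y : Fin n → Bool)
    (hc : ∀ x v, g x v = y v) : ∀ x, Reach g x y := by
  have key : ∀ (k : ℕ) (x : Fin n → Bool),
      (Finset.univ.filter (fun i => x i ≠ y i)).card ≤ k → Reach g x y := by
    intro k
    induction k with
    | zero =>
      intro x hx
      have hxy : x = y := by
        funext i
        by_contra hi
        have : i ∈ Finset.univ.filter (fun i => x i ≠ y i) := by simp [hi]
        have := Finset.card_pos.mpr ⟨i, this⟩
        omega
      exact hxy ▸ Relation.ReflTransGen.refl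
    | succ k ih =>
      intro x hx
      by_cases hxy : x = y
      · exact hxy ▸ Relation.ReflTransGen.refl
      have hex : ∃ i, x i ≠ y i := by
        by_contra h'; push_neg at h'; exact hxy (funext h')
      obtain ⟨i, hi⟩ := hex
      have hstep : AsyncStep g x (Function.update x i (y i)) :=
        ⟨i, by rw [hc]; exact fun h => hi h.symm, by rw [hc]⟩
      refine Relation.ReflTransGen.head hstep (ih _ ?_)
      have hsub : Finset.univ.filter (fun j => Function.update x i (y i) j ≠ y j)
          ⊆ (Finset.univ.filter (fun j => x j ≠ y j)).erase i := by
        intro j hj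
        simp only [Finset.mem_filter, Finset.mem_univ, true_and] at hj
        have hji : j ≠ i := by
          intro hji; subst hji
          exact hj (by simp)
        refine Finset.mem_erase.mpr ⟨hji, ?_⟩
        simp only [Finset.mem_filter, Finset.mem_univ, true_and]
        rwa [Function.update_of_ne hji] at hj
      have h1 := Finset.card_le_card hsub
      have h2 : i ∈ Finset.univ.filter (fun j => x j ≠ y j) := by simp [hi]
      have h3 := Finset.card_erase_of_mem h2
      have h4 := Finset.card_pos.mpr ⟨i, h2⟩
      omega
  intro x
  exact key _ x le_rfl

noncomputable def outSet {n : ℕ} (g : (Fin n → Bool) → (Fin n → Bool)) : Finset (Fin n) :=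
  @Finset.filter _ (fun u => ∃ v, EdgeU g u v) (Classical.decPred _) Finset.univ

lemma mem_outSet {n : ℕ} (g : (Fin n → Bool) → (Fin n → Bool)) (u : Fin n) :
    u ∈ outSet g ↔ ∃ v, EdgeU g u v := by
  simp only [outSet, Finset.mem_filter, Finset.mem_univ, true_and]

lemma reach_of_out_empty {n : ℕ} (g : (Fin n → Bool) → (Fin n → Bool)) (y : Fin n → Bool)
    (h : ∀ u v, ¬ EdgeU g u v) (hy : g y = y) : ∀ x, Reach g x y := by
  apply reach_of_const g y
  intro x v
  exact (const_of_no_in g v (fun u => h u v) x y).trans (congrFun hy v)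

lemma main_reach {n : ℕ} : ∀ (k : ℕ) (g : (Fin n → Bool) → (Fin n → Bool)) (y : Fin n → Bool),
    (outSet g).card ≤ k → g y = y → (¬ ∃ es, IsPosCycle g es) → ∀ x, Reach g x y := by
  intro k
  induction k with
  | zero =>
    intro g y hk hy _ x
    refine reach_of_out_empty g y ?_ hy x
    intro u v hu
    have hmem : u ∈ outSet g := by
      exact (mem_outSet g u).mpr ⟨v, hu⟩
    have := Finset.card_pos.mpr ⟨u, hmem⟩
    omega
  | succ k ih =>
    intro g y hk hy hnc x
    by_cases hD : outSet g = ∅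
    · refine reach_of_out_empty g y ?_ hy x
      intro u v hu
      have hmem : u ∈ outSet g := (mem_outSet g u).mpr ⟨v, hu⟩
      rw [hD] at hmem
      exact absurd hmem (Finset.notMem_empty u)
    -- there is a vertex with an out-edge but no in-edge
    have hu : ∃ u, (∃ v, EdgeU g u v) ∧ ∀ w, ¬ EdgeU g w u := by
      by_contra hall
      push_neg at hall
      apply hnc
      obtain ⟨u0, hu0⟩ := Finset.nonempty_of_ne_empty hD
      have hu0' : ∃ v, EdgeU g u0 v := (mem_outSet g u0).mp hu0
      obtain ⟨v0, hv0⟩ := hu0'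
      exact exists_posCycle_of_no_source g y hy
        (fun u huv => hall u huv) ⟨u0, v0, hv0⟩
    obtain ⟨u, ⟨v1, huv1⟩, hin⟩ := hu
    have hguc : ∀ x, g x u = y u :=
      fun x => (const_of_no_in g u hin x y).trans (congrFun hy u)
    set g' : (Fin n → Bool) → (Fin n → Bool) :=
      fun x => g (Function.update x u (y u)) with hg'def
    have hT : ∀ a v s, SignedEdge g' a v s → SignedEdge g a v s ∧ a ≠ u := by
      intro a v s hs
      have hanu : a ≠ u := by
        intro hau
        subst hau
        have hindep : ∀ (x : Fin n → Bool) b,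
            g' (Function.update x a b) v = g' (Function.update x a true) v := by
          intro x b
          show g (Function.update (Function.update x a b) a (y a)) v
            = g (Function.update (Function.update x a true) a (y a)) v
          rw [Function.update_idem, Function.update_idem]
        cases s <;> obtain ⟨x, h1, h2⟩ := hs
        · rw [hindep x false, h1] at h2; exact Bool.noConfusion h2
        · rw [hindep x false, h1] at h2; exact Bool.noConfusion h2
      refine ⟨?_, hanu⟩
      have hkey : ∀ (x : Fin n → Bool) b,
          g' (Function.update x a b) v
            = g (Function.update (Function.update x u (y u)) a b) v := by
        intro x b
        show g (Function.update (Function.update x a b) u (y u)) v = _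
        rw [Function.update_comm hanu]
      cases s <;> obtain ⟨x, h1, h2⟩ := hs <;>
        rw [hkey] at h1 h2 <;> exact ⟨Function.update x u (y u), h1, h2⟩
    have hnc' : ¬ ∃ es, IsPosCycle g' es := by
      rintro ⟨es, ⟨hne, hmem, hch, hwrap⟩, hev⟩
      exact hnc ⟨es, ⟨hne, fun e he => (hT e.1 e.2.1 e.2.2 (hmem e he)).1, hch, hwrap⟩, hev⟩
    have hg'y : g' y = y := by
      show g (Function.update y u (y u)) = y
      rw [Function.update_eq_self]
      exact hy
    have hsub : outSet g' ⊆ (outSet g).erase u := by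
      intro a ha
      obtain ⟨v, hv⟩ := (mem_outSet g' a).mp ha
      have : EdgeU g a v ∧ a ≠ u := by
        rcases hv with h | h
        · have := hT a v true h
          exact ⟨Or.inl this.1, this.2⟩
        · have := hT a v false h
          exact ⟨Or.inr this.1, this.2⟩
      exact Finset.mem_erase.mpr ⟨this.2, (mem_outSet g a).mpr ⟨v, this.1⟩⟩
    have humem : u ∈ outSet g := (mem_outSet g u).mpr ⟨v1, huv1⟩
    have hk' : (outSet g').card ≤ k := by
      have h1 := Finset.card_le_card hsub
      have h3 := Finset.card_erase_of_mem humem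
      have h4 := Finset.card_pos.mpr ⟨u, humem⟩
      omega
    have hreach' : ∀ z, Reach g' z y := ih g' y hk' hg'y hnc'
    have hlift : ∀ z, Reach g' z y → z u = y u → Reach g z y := by
      intro z hr
      induction hr using Relation.ReflTransGen.head_induction_on with
      | refl => intro _; exact Relation.ReflTransGen.refl
      | head hstep _ ihh =>
        rename_i a b _
        intro hz
        obtain ⟨vv, hvv1, hvv2⟩ := hstep
        have hga : g' a = g a := by
          show g (Function.update a u (y u)) = g a
          rw [← hz, Function.update_eq_self]
        have hvu : vv ≠ u := by
          intro hvvu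
          subst hvvu
          rw [hga, hguc a, hz] at hvv1
          exact hvv1 rfl
        have hbu : b u = y u := by
          rw [hvv2, Function.update_of_ne (Ne.symm hvu), hz]
        rw [hga] at hvv1 hvv2
        exact Relation.ReflTransGen.head ⟨vv, hvv1, hvv2⟩ (ihh hbu)
    by_cases hxu : x u = y u
    · exact hlift x (hreach' x) hxu
    · have hstep : AsyncStep g x (Function.update x u (y u)) :=
        ⟨u, by rw [hguc x]; exact fun h => hxu h.symm, by rw [hguc x]⟩
      refine Relation.ReflTransGen.head hstep (hlift _ (hreach' _) (by simp))

lemma chain_reach_from_head {n : ℕ} {f : (Fin n → Bool) → (Fin n → Bool)} :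
    ∀ (es : List (Fin n × Fin n × Bool)), es.Chain' (fun e e' => e.2.1 = e'.1) →
    (∀ e ∈ es, EdgeU f e.1 e.2.1) → ∀ a, es.head?.map Prod.fst = some a →
    ∀ e ∈ es, Relation.ReflTransGen (EdgeU f) a e.1 := by
  intro es
  induction es with
  | nil => intro _ _ a _ e he; exact absurd he List.not_mem_nil
  | cons e0 rest ih =>
    intro hch hm a ha e he
    have ha0 : e0.1 = a := by simpa using ha
    rcases List.mem_cons.mp he with rfl | hrest
    · exact ha0 ▸ Relation.ReflTransGen.refl
    · cases rest with
      | nil => exact absurd hrest List.not_mem_nil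
      | cons r0 rest' =>
        have hch' := List.isChain_cons_cons.mp hch
        have hstep : EdgeU f a r0.1 := by
          rw [← ha0, ← hch'.1]
          exact hm e0 List.mem_cons_self
        exact Relation.ReflTransGen.head hstep
          (ih hch'.2 (fun e' he' => hm e' (List.mem_cons_of_mem _ he')) r0.1 (by simp) e hrest)

lemma chain_reach_to_last {n : ℕ} {f : (Fin n → Bool) → (Fin n → Bool)} :
    ∀ (es : List (Fin n × Fin n × Bool)), es.Chain' (fun e e' => e.2.1 = e'.1) →
    (∀ e ∈ es, EdgeU f e.1 e.2.1) → ∀ b, es.getLast?.map (fun e => e.2.1) = some b →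
    ∀ e ∈ es, Relation.ReflTransGen (EdgeU f) e.1 b := by
  intro es
  induction es with
  | nil => intro _ _ b _ e he; exact absurd he List.not_mem_nil
  | cons e0 rest ih =>
    intro hch hm b hb e he
    cases rest with
    | nil =>
      have heq : e = e0 := by simpa using he
      subst heq
      have hb0 : e.2.1 = b := by simpa using hb
      exact Relation.ReflTransGen.single (hb0 ▸ hm e List.mem_cons_self)
    | cons r0 rest' =>
      have hb' : (r0 :: rest').getLast?.map (fun e => e.2.1) = some b := by
        rwa [List.getLast?_cons_cons] at hb
      have hch' := List.isChain_cons_cons.mp hch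
      have hm' : ∀ e' ∈ r0 :: rest', EdgeU f e'.1 e'.2.1 :=
        fun e' he' => hm e' (List.mem_cons_of_mem _ he')
      rcases List.mem_cons.mp he with rfl | hrest
      · have h1 : EdgeU f e.1 e.2.1 := hm e List.mem_cons_self
        have h3 := ih hch'.2 hm' b hb' r0 List.mem_cons_self
        exact Relation.ReflTransGen.head h1 (hch'.1 ▸ h3)
      · exact ih hch'.2 hm' b hb' e hrest

lemma modify_no_posCycle {n : ℕ} (f : (Fin n → Bool) → (Fin n → Bool)) (y : Fin n → Bool) :
    ¬ ∃ es, IsPosCycle (modifyBN f {i | InPosSCC f i} y) es := by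
  rintro ⟨es, ⟨hne, hmem, hch, hwrap⟩, hev⟩
  have htarget : ∀ e ∈ es, ¬ InPosSCC f e.2.1 := by
    intro e he hin
    have hthis := hmem e he
    cases hs : e.2.2 <;> rw [hs] at hthis <;> obtain ⟨x, h1, h2⟩ := hthis <;>
      simp only [modifyBN, Set.mem_setOf_eq, if_pos hin] at h1 h2 <;>
      rw [if_pos (show e.2.1 ∈ {i | InPosSCC f i} from hin)] at h1 h2 <;>
      rw [h1] at h2 <;> exact Bool.noConfusion h2
  have hedges : ∀ e ∈ es, SignedEdge f e.1 e.2.1 e.2.2 := by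
    intro e he
    have hthis := hmem e he
    have hni := htarget e he
    cases hs : e.2.2 <;> rw [hs] at hthis <;> obtain ⟨x, h1, h2⟩ := hthis <;>
      simp only [modifyBN, Set.mem_setOf_eq, if_neg hni] at h1 h2 <;>
      rw [if_neg (show e.2.1 ∉ {i | InPosSCC f i} from hni)] at h1 h2 <;>
      exact ⟨x, h1, h2⟩
  have hedgesU : ∀ e ∈ es, EdgeU f e.1 e.2.1 := by
    intro e he
    have := hedges e he
    cases hs : e.2.2 <;> rw [hs] at this
    · exact Or.inr this
    · exact Or.inl this
  obtain ⟨e0, rest, rfl⟩ := List.exists_cons_of_ne_nil hne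
  have hhead : ((e0 :: rest).head?.map Prod.fst) = some e0.1 := rfl
  have hSCC : ∀ v ∈ (e0 :: rest).map Prod.fst, SameSCC f v e0.1 := by
    intro v hv
    obtain ⟨e, he, rfl⟩ := List.mem_map.mp hv
    constructor
    · exact chain_reach_to_last _ hch hedgesU e0.1 (hwrap.trans hhead) e he
    · exact chain_reach_from_head _ hch hedgesU e0.1 hhead e he
  have hin : InPosSCC f e0.1 := ⟨e0 :: rest, ⟨⟨hne, hedges, hch, hwrap⟩, hev⟩, hSCC⟩
  have hlastmem := List.getLast_mem hne
  have hlast : ((e0 :: rest).getLast hne).2.1 = e0.1 := by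
    have h1 : ((e0 :: rest).getLast?.map (fun e => e.2.1)) = some e0.1 := hwrap.trans hhead
    rw [List.getLast?_eq_getLast hne] at h1
    simpa using h1
  exact htarget _ hlastmem (hlast ▸ hin)


/-- fixing all vertices of SCCs containing a positive cycle to their
values in the fixed point `y` makes `y` reachable from every state; in particular
`{y}` is the unique attractor of the modified network. -/
theorem stmt5 {n : ℕ} (f : (Fin n → Bool) → (Fin n → Bool)) (y : Fin n → Bool)
    (hy : f y = y) :
    (∀ x : Fin n → Bool, Reach (modifyBN f {i | InPosSCC f i} y) x y) ∧
    IsAttractor (modifyBN f {i | InPosSCC f i} y) {y} ∧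
    (∀ S, IsAttractor (modifyBN f {i | InPosSCC f i} y) S → S = {y}) := by
  set g := modifyBN f {i | InPosSCC f i} y with hgdef
  have hgy : g y = y := by
    funext i
    show modifyBN f {i | InPosSCC f i} y y i = y i
    unfold modifyBN
    split
    · rfl
    · exact congrFun hy i
  have hnc : ¬ ∃ es, IsPosCycle g es := modify_no_posCycle f y
  have hreach : ∀ x, Reach g x y := main_reach (outSet g).card g y le_rfl hgy hnc
  have hnostep : ∀ z, ¬ AsyncStep g y z := by
    rintro z ⟨u, h1, -⟩
    exact h1 (congrFun hgy u)
  refine ⟨hreach, ⟨⟨y, rfl⟩, ?_, ?_⟩, ?_⟩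
  · rintro x rfl z hz
    exact absurd hz (hnostep z)
  · rintro x rfl z rfl
    exact Relation.ReflTransGen.refl
  · rintro S ⟨⟨x0, hx0⟩, hclosed, hconn⟩
    have hmem : ∀ a b, Reach g a b → a ∈ S → b ∈ S := by
      intro a b hr
      induction hr with
      | refl => exact id
      | tail _ h2 ih => exact fun ha => hclosed _ (ih ha) _ h2
    have hyS : y ∈ S := hmem x0 y (hreach x0) hx0
    refine Set.eq_singleton_iff_unique_mem.mpr ⟨hyS, fun z hz => ?_⟩
    rcases Relation.ReflTransGen.cases_head (hconn y hyS z hz) with h | ⟨c, hs, -⟩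
    · exact h.symm
    · exact absurd hs (hnostep c)
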